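/- arXiv:2002.09968 — 2 statements merged into one kernel-verified Lean document; each statement's English description precedes it below -/
import Mathlib

section
/- Let W_h be a random variable with the (asymmetric-shifted Gaussian) density π_h(x) = k_h^{−1} exp[−((x−h)² 1{x≤0} + (x+h)² 1{x>0})/2], where k_h = 2√(2π)Φ(−h). Then as h → ∞: (i) P(W_h ≤ 0) = 1/2 for every h; (ii) h·E[W_h·1{W_h ≤ 0}] → −1/2; (iii) h²·E[W_h²·1{W_h ≤ 0}] → 1. -/
open Real MeasureTheory ProbabilityTheory Filter

open Set Topology

set_option maxHeartbeats 1000000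

noncomputable def QQ (h : ℝ) : ℝ := ∫ x in Set.Ioi h, Real.exp (-x^2/2)
noncomputable def EE (h : ℝ) : ℝ := Real.exp (-h^2/2)

lemma gauss_int : Integrable fun x : ℝ => Real.exp (-x^2/2) := by
  have := integrable_exp_neg_mul_sq (b := (1:ℝ)/2) (by norm_num)
  have heq : (fun x : ℝ => Real.exp (-x^2/2)) = fun x : ℝ => Real.exp (-(1/2) * x^2) := by
    funext x; ring_nf
  rw [heq]; exact this

lemma gauss_pos (x : ℝ) : 0 < Real.exp (-x^2/2) := Real.exp_pos _

lemma QQ_pos (h : ℝ) : 0 < QQ h := by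
  have hint : IntegrableOn (fun x : ℝ => Real.exp (-x^2/2)) (Set.Ioi h) := gauss_int.integrableOn
  refine (setIntegral_pos_iff_support_of_nonneg_ae ?_ hint).2 ?_
  · filter_upwards with x using (gauss_pos x).le
  · have : (Function.support fun x : ℝ => Real.exp (-x^2/2)) = Set.univ := by
      ext x; simp [Function.support, (gauss_pos x).ne']
    rw [this]
    simp [Set.univ_inter]

lemma tendsto_neg_sq_atBot : Tendsto (fun x : ℝ => -x^2/2) atTop atBot := by
  have h1 : Tendsto (fun x : ℝ => x^2) atTop atTop := tendsto_pow_atTop (two_ne_zero)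
  have h2 : Tendsto (fun x : ℝ => -(x^2)) atTop atBot := tendsto_neg_atBot_iff.2 h1
  have h3 := h2.atBot_div_const (by norm_num : (0:ℝ) < 2)
  simpa [neg_div] using h3

lemma tendsto_gauss_zero : Tendsto (fun x : ℝ => Real.exp (-x^2/2)) atTop (𝓝 0) :=
  Real.tendsto_exp_atBot.comp tendsto_neg_sq_atBot

lemma tendsto_mul_gauss : Tendsto (fun x : ℝ => x * Real.exp (-x^2/2)) atTop (𝓝 0) := by
  have ho := rpow_mul_exp_neg_mul_sq_isLittleO_exp_neg (b := (1:ℝ)/2) (by norm_num) 1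
  have hhalf : Tendsto (fun x : ℝ => (1/2 : ℝ) * x) atTop atTop :=
    Tendsto.const_mul_atTop (by norm_num) tendsto_id
  have h0 : Tendsto (fun x : ℝ => Real.exp (-(1/2) * x)) atTop (𝓝 0) := by
    have h1 := Real.tendsto_exp_atBot.comp (tendsto_neg_atBot_iff.2 hhalf)
    refine h1.congr fun x => ?_
    simp [Function.comp, neg_mul]
  have := ho.isBigO.trans_tendsto h0
  refine this.congr' ?_
  filter_upwards [eventually_gt_atTop (0:ℝ)] with x hx
  rw [Real.rpow_one]
  ring_nf

lemma gauss_hasDeriv (x : ℝ) :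
    HasDerivAt (fun y : ℝ => Real.exp (-y^2/2)) (Real.exp (-x^2/2) * (-x)) x := by
  have h1 : HasDerivAt (fun y : ℝ => -y^2/2) (-x) x := by
    have := (hasDerivAt_pow 2 x).neg.div_const 2
    refine this.congr_deriv ?_
    rw [show (2:ℕ)-1 = 1 from rfl]; push_cast; ring
  exact h1.exp.congr_deriv (by ring)

lemma Jint (k : ℕ) {h : ℝ} (hh : 1 ≤ h) :
    IntegrableOn (fun x : ℝ => x⁻¹^k * Real.exp (-x^2/2)) (Set.Ioi h) := by
  refine Integrable.mono' gauss_int.integrableOn ?_ ?_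
  · exact ((measurable_inv.pow_const k).mul
      (((measurable_id.pow_const 2).neg.div_const 2).exp)).aestronglyMeasurable
  · filter_upwards [ae_restrict_mem measurableSet_Ioi] with x hx
    have hx1 : (1:ℝ) ≤ x := hh.trans hx.le
    have h1 : |x⁻¹| ≤ 1 := by
      rw [abs_of_nonneg (by positivity)]
      exact inv_le_one_of_one_le₀ hx1
    have : |x⁻¹^k| ≤ 1 := by
      rw [abs_pow]; exact pow_le_one₀ (abs_nonneg _) h1
    calc ‖x⁻¹^k * Real.exp (-x^2/2)‖ = |x⁻¹^k| * Real.exp (-x^2/2) := by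
          rw [norm_mul, Real.norm_eq_abs, Real.norm_eq_abs, abs_of_pos (gauss_pos x)]
      _ ≤ 1 * Real.exp (-x^2/2) := by gcongr
      _ = Real.exp (-x^2/2) := one_mul _

lemma ftc_gauss (k : ℕ) {h : ℝ} (hh : 1 ≤ h) :
    ∫ x in Set.Ioi h, (((k:ℝ)+1) * x⁻¹^(k+2) + x⁻¹^k) * Real.exp (-x^2/2)
      = h⁻¹^(k+1) * EE h := by
  have h0 : (0:ℝ) < h := lt_of_lt_of_le one_pos hh
  have hderiv : ∀ x ∈ Set.Ici h,
      HasDerivAt (fun y : ℝ => -(y⁻¹^(k+1) * Real.exp (-y^2/2)))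
        ((((k:ℝ)+1) * x⁻¹^(k+2) + x⁻¹^k) * Real.exp (-x^2/2)) x := by
    intro x hx
    have hxpos : (0:ℝ) < x := lt_of_lt_of_le h0 hx
    have hinv : HasDerivAt (fun y : ℝ => y⁻¹^(k+1))
        ((k+1 : ℕ) * x⁻¹^k * (-(x^2)⁻¹)) x :=
      (hasDerivAt_inv hxpos.ne').pow (k+1)
    have hmul := (hinv.mul (gauss_hasDeriv x)).neg
    refine hmul.congr_deriv ?_
    have hx2 : (x^2)⁻¹ = x⁻¹^2 := by rw [inv_pow]
    push_cast
    have hx1 : x⁻¹ * x = 1 := inv_mul_cancel₀ hxpos.ne'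
    linear_combination (x⁻¹^k * Real.exp (-x^2/2)) * hx1
  have hint : IntegrableOn
      (fun x : ℝ => (((k:ℝ)+1) * x⁻¹^(k+2) + x⁻¹^k) * Real.exp (-x^2/2)) (Set.Ioi h) := by
    have h1 := (Jint (k+2) hh).const_mul ((k:ℝ)+1)
    have h2 := Jint k hh
    have := h1.add h2
    refine this.congr ?_
    filter_upwards with x
    simp only [Pi.add_apply]
    ring
  have htend : Tendsto (fun y : ℝ => -(y⁻¹^(k+1) * Real.exp (-y^2/2))) atTop (𝓝 0) := by
    have := ((tendsto_inv_atTop_zero.pow (k+1)).mul tendsto_gauss_zero).neg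
    simpa using this
  have := integral_Ioi_of_hasDerivAt_of_tendsto'
    (f := fun y : ℝ => -(y⁻¹^(k+1) * Real.exp (-y^2/2)))
    (fun x hx => hderiv x hx) hint htend
  rw [this]
  simp [EE]

lemma mills {h : ℝ} (hh : 1 ≤ h) :
    EE h * ((h^4 - h^2 + 3)/h^5) - 15 * (h⁻¹^6 * QQ h) ≤ QQ h ∧
      QQ h ≤ EE h * ((h^4 - h^2 + 3)/h^5) := by
  have h0 : (0:ℝ) < h := lt_of_lt_of_le one_pos hh
  set J : ℕ → ℝ := fun k => ∫ x in Set.Ioi h, x⁻¹^k * Real.exp (-x^2/2) with hJ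
  have hsplit : ∀ (c : ℝ) (a b : ℕ),
      ∫ x in Set.Ioi h, (c * x⁻¹^a + x⁻¹^b) * Real.exp (-x^2/2) = c * J a + J b := by
    intro c a b
    rw [show (fun x : ℝ => (c * x⁻¹^a + x⁻¹^b) * Real.exp (-x^2/2))
        = fun x : ℝ => c * (x⁻¹^a * Real.exp (-x^2/2)) + x⁻¹^b * Real.exp (-x^2/2)
      from funext fun x => by ring]
    rw [integral_add ((Jint a hh).const_mul c) (Jint b hh), integral_const_mul]
  have e0 : (1:ℝ) * J 2 + J 0 = h⁻¹^1 * EE h := by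
    have := ftc_gauss 0 hh; rw [← this, ← hsplit 1 2 0]; norm_num
  have e2 : (3:ℝ) * J 4 + J 2 = h⁻¹^3 * EE h := by
    have := ftc_gauss 2 hh; rw [← this, ← hsplit 3 4 2]; norm_num
  have e4 : (5:ℝ) * J 6 + J 4 = h⁻¹^5 * EE h := by
    have := ftc_gauss 4 hh; rw [← this, ← hsplit 5 6 4]; norm_num
  have hJ0 : J 0 = QQ h := by
    simp only [hJ, pow_zero, one_mul, QQ]
  have hJ6nonneg : 0 ≤ J 6 := by
    refine setIntegral_nonneg measurableSet_Ioi fun x hx => ?_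
    have : (0:ℝ) < x := lt_of_lt_of_le h0 hx.le
    positivity
  have hJ6le : J 6 ≤ h⁻¹^6 * QQ h := by
    calc J 6 ≤ ∫ x in Set.Ioi h, h⁻¹^6 * Real.exp (-x^2/2) := by
          refine setIntegral_mono_on (Jint 6 hh) (gauss_int.integrableOn.const_mul _)
            measurableSet_Ioi fun x hx => ?_
          have hxh : h ≤ x := hx.le
          have hinv : x⁻¹ ≤ h⁻¹ := inv_anti₀ h0 hxh
          have hxinv : (0:ℝ) ≤ x⁻¹ := by
            have : (0:ℝ) < x := lt_of_lt_of_le h0 hxh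
            positivity
          gcongr
      _ = h⁻¹^6 * QQ h := integral_const_mul _ _
  have hEpos : 0 < EE h := Real.exp_pos _
  have hP : h⁻¹^1 - h⁻¹^3 + 3 * h⁻¹^5 = (h^4 - h^2 + 3)/h^5 := by
    field_simp
  have hQeq : QQ h = EE h * ((h^4 - h^2 + 3)/h^5) - 15 * J 6 := by
    rw [← hP, ← hJ0]
    nlinarith [e0, e2, e4]
  constructor
  · nlinarith
  · nlinarith

lemma millsD {h : ℝ} (hh : 1 ≤ h) :
    h^5 * QQ h ≤ EE h * (h^4 - h^2 + 3) ∧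
      h * (EE h * (h^4 - h^2 + 3)) ≤ (h^6 + 15) * QQ h := by
  have h0 : (0:ℝ) < h := lt_of_lt_of_le one_pos hh
  obtain ⟨m1, m2⟩ := mills hh
  have key : h^5 * (EE h * ((h^4-h^2+3)/h^5)) = EE h * (h^4-h^2+3) := by
    field_simp
  have key6 : h^6 * (h⁻¹^6 * QQ h) = QQ h := by
    field_simp
  constructor
  · have := mul_le_mul_of_nonneg_left m2 (by positivity : (0:ℝ) ≤ h^5)
    rw [key] at this
    linarith
  · have := mul_le_mul_of_nonneg_left m1 (by positivity : (0:ℝ) ≤ h^6)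
    have e15 : h^6 * (15 * (h⁻¹^6 * QQ h)) = 15 * QQ h := by
      field_simp
    have h65 : h^6 * (EE h * ((h^4-h^2+3)/h^5)) = h * (EE h * (h^4-h^2+3)) := by
      field_simp
    rw [mul_sub, e15, h65] at this
    linarith

lemma ratlim (a b c : ℝ) :
    Tendsto (fun h : ℝ => (a*h^4 + b*h^2 + c)/(h^4 - h^2 + 3)) atTop (𝓝 a) := by
  have hb : Tendsto (fun h : ℝ => h⁻¹) atTop (𝓝 (0:ℝ)) := tendsto_inv_atTop_zero
  have h1 : Tendsto
      (fun h : ℝ => (a + b*(h⁻¹)^2 + c*(h⁻¹)^4)/(1 - (h⁻¹)^2 + 3*(h⁻¹)^4)) atTop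
      (𝓝 ((a + b*(0:ℝ)^2 + c*0^4)/(1 - (0:ℝ)^2 + 3*0^4))) := by
    apply Tendsto.div
    · exact (tendsto_const_nhds.add ((hb.pow 2).const_mul b)).add ((hb.pow 4).const_mul c)
    · exact (tendsto_const_nhds.sub (hb.pow 2)).add ((hb.pow 4).const_mul 3)
    · norm_num
  norm_num at h1
  refine h1.congr' ?_
  filter_upwards [eventually_ge_atTop (1:ℝ)] with h hh
  have h0 : (0:ℝ) < h := lt_of_lt_of_le one_pos hh
  have hi0 : (0:ℝ) < h⁻¹ := by positivity
  have hi1 : h⁻¹ ≤ 1 := inv_le_one_of_one_le₀ hh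
  have hx2 : h⁻¹^2 ≤ 1 := pow_le_one₀ hi0.le hi1
  have hx4 : (0:ℝ) < h⁻¹^4 := by positivity
  have hD2 : (0:ℝ) < 1 - (h⁻¹)^2 + 3*(h⁻¹)^4 := by nlinarith
  have hD : (0:ℝ) < h^4 - h^2 + 3 := by nlinarith [sq_nonneg (h^2-1)]
  rw [div_eq_div_iff (by simpa using hD2.ne') (by simpa using hD.ne')]
  field_simp

lemma limit_ii : Tendsto (fun h : ℝ => h * (EE h / QQ h - h)) atTop (𝓝 1) := by
  have hlow := ratlim 1 (-3) 0
  have hup := ratlim 1 (-3) 15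
  refine tendsto_of_tendsto_of_tendsto_of_le_of_le' hlow hup ?_ ?_
  · filter_upwards [eventually_ge_atTop (1:ℝ)] with h hh
    have h0 : (0:ℝ) < h := lt_of_lt_of_le one_pos hh
    have hQ := QQ_pos h
    have hE : (0:ℝ) < EE h := Real.exp_pos _
    have hD : (0:ℝ) < h^4 - h^2 + 3 := by nlinarith [sq_nonneg (h^2-1)]
    obtain ⟨m1, m2⟩ := millsD hh
    have heq : h * (EE h / QQ h - h) = (h * EE h - h^2 * QQ h) / QQ h := by
      field_simp
    rw [heq, show (1:ℝ)*h^4 + (-3)*h^2 + 0 = h^4 - 3*h^2 by ring,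
      div_le_div_iff₀ hD hQ]
    nlinarith [mul_le_mul_of_nonneg_left m1 h0.le]
  · filter_upwards [eventually_ge_atTop (1:ℝ)] with h hh
    have h0 : (0:ℝ) < h := lt_of_lt_of_le one_pos hh
    have hQ := QQ_pos h
    have hD : (0:ℝ) < h^4 - h^2 + 3 := by nlinarith [sq_nonneg (h^2-1)]
    obtain ⟨m1, m2⟩ := millsD hh
    have heq : h * (EE h / QQ h - h) = (h * EE h - h^2 * QQ h) / QQ h := by
      field_simp
    rw [heq, show (1:ℝ)*h^4 + (-3)*h^2 + 15 = h^4 - 3*h^2 + 15 by ring,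
      div_le_div_iff₀ hQ hD]
    nlinarith

lemma limit_iii : Tendsto (fun h : ℝ => h^3 * (EE h / QQ h) - h^4 - h^2) atTop (𝓝 (-2)) := by
  have hlow := ratlim (-2) (-3) 0
  have hup := ratlim (-2) 12 0
  refine tendsto_of_tendsto_of_tendsto_of_le_of_le' hlow hup ?_ ?_
  · filter_upwards [eventually_ge_atTop (1:ℝ)] with h hh
    have h0 : (0:ℝ) < h := lt_of_lt_of_le one_pos hh
    have hQ := QQ_pos h
    have hD : (0:ℝ) < h^4 - h^2 + 3 := by nlinarith [sq_nonneg (h^2-1)]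
    obtain ⟨m1, m2⟩ := millsD hh
    have heq : h^3 * (EE h / QQ h) - h^4 - h^2
        = (h^3 * EE h - (h^4 + h^2) * QQ h) / QQ h := by
      field_simp; ring
    rw [heq, show (-2:ℝ)*h^4 + (-3)*h^2 + 0 = -2*h^4 - 3*h^2 by ring,
      div_le_div_iff₀ hD hQ]
    nlinarith [mul_le_mul_of_nonneg_left m1 (by positivity : (0:ℝ) ≤ h^3)]
  · filter_upwards [eventually_ge_atTop (1:ℝ)] with h hh
    have h0 : (0:ℝ) < h := lt_of_lt_of_le one_pos hh
    have hQ := QQ_pos h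
    have hD : (0:ℝ) < h^4 - h^2 + 3 := by nlinarith [sq_nonneg (h^2-1)]
    obtain ⟨m1, m2⟩ := millsD hh
    have heq : h^3 * (EE h / QQ h) - h^4 - h^2
        = (h^3 * EE h - (h^4 + h^2) * QQ h) / QQ h := by
      field_simp; ring
    rw [heq, show (-2:ℝ)*h^4 + 12*h^2 + 0 = -2*h^4 + 12*h^2 by ring,
      div_le_div_iff₀ hQ hD]
    nlinarith [mul_le_mul_of_nonneg_left m2 (by positivity : (0:ℝ) ≤ h^2)]

lemma gauss_int1 : Integrable fun x : ℝ => x * Real.exp (-x^2/2) := by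
  have := integrable_mul_exp_neg_mul_sq (b := (1:ℝ)/2) (by norm_num)
  have heq : (fun x : ℝ => x * Real.exp (-x^2/2))
      = fun x : ℝ => x * Real.exp (-(1/2) * x^2) := by
    funext x; ring_nf
  rw [heq]; exact this

lemma gauss_int2 : Integrable fun x : ℝ => x^2 * Real.exp (-x^2/2) := by
  have := integrable_rpow_mul_exp_neg_mul_sq (b := (1:ℝ)/2) (by norm_num)
    (s := 2) (by norm_num)
  have heq : (fun x : ℝ => x^2 * Real.exp (-x^2/2))
      = fun x : ℝ => x ^ (2:ℝ) * Real.exp (-(1/2) * x^2) := by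
    funext x
    rw [show ((2:ℝ) = ((2:ℕ):ℝ)) by norm_num, Real.rpow_natCast]
    ring_nf
  rw [heq]; exact this

lemma iic_shift (h : ℝ) (g : ℝ → ℝ) :
    ∫ x in Set.Iic (0:ℝ), g (x - h) = ∫ y in Set.Iic (-h), g y := by
  rw [← integral_indicator measurableSet_Iic, ← integral_indicator measurableSet_Iic]
  have : (Set.indicator (Set.Iic (0:ℝ)) fun x => g (x - h))
      = fun x => Set.indicator (Set.Iic (-h)) g (x - h) := by
    funext x
    have hiff : x - h ≤ -h ↔ x ≤ 0 := by constructor <;> intro <;> linarith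
    simp [Set.indicator_apply, Set.mem_Iic, hiff]
  rw [this, integral_sub_right_eq_self (Set.indicator (Set.Iic (-h)) g) h]

lemma intIic_gauss (h : ℝ) : ∫ y in Set.Iic (-h), Real.exp (-y^2/2) = QQ h := by
  have : ∫ y in Set.Iic (-h), Real.exp (-y^2/2)
      = ∫ y in Set.Iic (-h), Real.exp (-(-y)^2/2) := by
    refine setIntegral_congr_fun measurableSet_Iic fun y _ => ?_
    rw [neg_sq]
  rw [this, integral_comp_neg_Iic (-h) (fun y => Real.exp (-y^2/2)), neg_neg, QQ]

lemma intIic_y (h : ℝ) : ∫ y in Set.Iic (-h), y * Real.exp (-y^2/2) = -EE h := by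
  have hderiv : ∀ y ∈ Set.Iic (-h),
      HasDerivAt (fun z : ℝ => -Real.exp (-z^2/2)) (y * Real.exp (-y^2/2)) y := by
    intro y _
    exact (gauss_hasDeriv y).neg.congr_deriv (by ring)
  have htend : Tendsto (fun z : ℝ => -Real.exp (-z^2/2)) atBot (𝓝 0) := by
    have h1 := (tendsto_gauss_zero.comp tendsto_neg_atBot_atTop).neg
    rw [neg_zero] at h1
    refine h1.congr fun z => ?_
    simp [Function.comp, neg_sq]
  have := integral_Iic_of_hasDerivAt_of_tendsto' hderiv gauss_int1.integrableOn htend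
  rw [this]
  simp [EE]

lemma intIic_ysq (h : ℝ) :
    ∫ y in Set.Iic (-h), y^2 * Real.exp (-y^2/2) = h * EE h + QQ h := by
  have hderiv : ∀ y ∈ Set.Iic (-h),
      HasDerivAt (fun z : ℝ => -(z * Real.exp (-z^2/2)))
        ((y^2 - 1) * Real.exp (-y^2/2)) y := by
    intro y _
    exact (((hasDerivAt_id y).mul (gauss_hasDeriv y)).neg).congr_deriv (by simp only [id_eq]; ring)
  have htend : Tendsto (fun z : ℝ => -(z * Real.exp (-z^2/2))) atBot (𝓝 0) := by
    have h1 := tendsto_mul_gauss.comp tendsto_neg_atBot_atTop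
    have h2 : (fun z : ℝ => -(z * Real.exp (-z^2/2)))
        = (fun x : ℝ => x * Real.exp (-x^2/2)) ∘ (fun z : ℝ => -z) := by
      funext z; simp [Function.comp, neg_sq]
    rw [h2]; exact h1
  have hint : IntegrableOn (fun y : ℝ => (y^2 - 1) * Real.exp (-y^2/2)) (Set.Iic (-h)) := by
    have := gauss_int2.sub gauss_int
    refine this.integrableOn.congr_fun ?_ measurableSet_Iic
    intro x _
    simp only [Pi.sub_apply, sub_mul]
    ring
  have heval := integral_Iic_of_hasDerivAt_of_tendsto' hderiv hint htend
  have hsplit : ∫ y in Set.Iic (-h), (y^2 - 1) * Real.exp (-y^2/2)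
      = (∫ y in Set.Iic (-h), y^2 * Real.exp (-y^2/2))
        - ∫ y in Set.Iic (-h), Real.exp (-y^2/2) := by
    rw [← integral_sub gauss_int2.integrableOn gauss_int.integrableOn]
    refine setIntegral_congr_fun measurableSet_Iic fun y _ => ?_
    ring
  rw [hsplit, intIic_gauss] at heval
  have : -(-h * Real.exp (-(-h)^2/2)) - 0 = h * EE h := by
    simp [EE, neg_sq]
  rw [this] at heval
  linarith

lemma IA (h : ℝ) : ∫ x in Set.Iic (0:ℝ), Real.exp (-(x-h)^2/2) = QQ h := by
  have := iic_shift h (fun y => Real.exp (-y^2/2))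
  rw [this, intIic_gauss]

lemma IB (h : ℝ) :
    ∫ x in Set.Iic (0:ℝ), x * Real.exp (-(x-h)^2/2) = h * QQ h - EE h := by
  have hshift := iic_shift h (fun y => (y + h) * Real.exp (-y^2/2))
  have h1 : (fun x : ℝ => x * Real.exp (-(x-h)^2/2))
      = fun x : ℝ => ((x - h) + h) * Real.exp (-(x-h)^2/2) := by
    funext x; ring_nf
  rw [h1]
  rw [show (∫ x in Set.Iic (0:ℝ), ((x - h) + h) * Real.exp (-(x-h)^2/2))
      = ∫ x in Set.Iic (0:ℝ), (fun y => (y + h) * Real.exp (-y^2/2)) (x - h) from rfl]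
  rw [hshift]
  have hsplit : ∫ y in Set.Iic (-h), (y + h) * Real.exp (-y^2/2)
      = (∫ y in Set.Iic (-h), y * Real.exp (-y^2/2))
        + h * ∫ y in Set.Iic (-h), Real.exp (-y^2/2) := by
    rw [← integral_const_mul, ← integral_add gauss_int1.integrableOn
      (gauss_int.integrableOn.const_mul h)]
    refine setIntegral_congr_fun measurableSet_Iic fun y _ => ?_
    ring
  rw [hsplit, intIic_y, intIic_gauss]
  ring

lemma IC (h : ℝ) :
    ∫ x in Set.Iic (0:ℝ), x^2 * Real.exp (-(x-h)^2/2)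
      = (1 + h^2) * QQ h - h * EE h := by
  have hshift := iic_shift h (fun y => (y + h)^2 * Real.exp (-y^2/2))
  have h1 : (fun x : ℝ => x^2 * Real.exp (-(x-h)^2/2))
      = fun x : ℝ => ((x - h) + h)^2 * Real.exp (-(x-h)^2/2) := by
    funext x; ring_nf
  rw [h1]
  rw [show (∫ x in Set.Iic (0:ℝ), ((x - h) + h)^2 * Real.exp (-(x-h)^2/2))
      = ∫ x in Set.Iic (0:ℝ), (fun y => (y + h)^2 * Real.exp (-y^2/2)) (x - h) from rfl]
  rw [hshift]
  have hB : IntegrableOn (fun y : ℝ => 2*h*(y * Real.exp (-y^2/2))) (Set.Iic (-h)) :=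
    gauss_int1.integrableOn.const_mul (2*h)
  have hC : IntegrableOn (fun y : ℝ => h^2 * Real.exp (-y^2/2)) (Set.Iic (-h)) :=
    gauss_int.integrableOn.const_mul (h^2)
  have hBC : IntegrableOn
      (fun y : ℝ => 2*h*(y * Real.exp (-y^2/2)) + h^2 * Real.exp (-y^2/2))
      (Set.Iic (-h)) := hB.add hC
  have hsplit : ∫ y in Set.Iic (-h), (y + h)^2 * Real.exp (-y^2/2)
      = (∫ y in Set.Iic (-h), y^2 * Real.exp (-y^2/2))
        + (((2*h) * ∫ y in Set.Iic (-h), y * Real.exp (-y^2/2))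
        + h^2 * ∫ y in Set.Iic (-h), Real.exp (-y^2/2)) := by
    calc ∫ y in Set.Iic (-h), (y + h)^2 * Real.exp (-y^2/2)
        = ∫ y in Set.Iic (-h), (y^2 * Real.exp (-y^2/2)
            + (2*h*(y * Real.exp (-y^2/2)) + h^2 * Real.exp (-y^2/2))) := by
          refine setIntegral_congr_fun measurableSet_Iic fun y _ => ?_
          ring
      _ = (∫ y in Set.Iic (-h), y^2 * Real.exp (-y^2/2))
          + ∫ y in Set.Iic (-h), (2*h*(y * Real.exp (-y^2/2)) + h^2 * Real.exp (-y^2/2)) :=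
          integral_add gauss_int2.integrableOn hBC
      _ = (∫ y in Set.Iic (-h), y^2 * Real.exp (-y^2/2))
          + ((∫ y in Set.Iic (-h), 2*h*(y * Real.exp (-y^2/2)))
          + ∫ y in Set.Iic (-h), h^2 * Real.exp (-y^2/2)) := by
          rw [integral_add hB hC]
      _ = (∫ y in Set.Iic (-h), y^2 * Real.exp (-y^2/2))
          + (((2*h) * ∫ y in Set.Iic (-h), y * Real.exp (-y^2/2))
          + h^2 * ∫ y in Set.Iic (-h), Real.exp (-y^2/2)) := by
          rw [integral_const_mul, integral_const_mul]
  rw [hsplit, intIic_y, intIic_gauss, intIic_ysq]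
  ring

/-- Let `W h` be a random variable with density
`π_h(x) = k_h⁻¹ exp(-((x-h)² 1{x≤0} + (x+h)² 1{x>0})/2)`, `k_h = 2√(2π)Φ(-h)`.
Then (i) `P(W h ≤ 0) = 1/2` for every `h > 0`;
(ii) `h · E[W h · 1{W h ≤ 0}] → -1/2` as `h → ∞`;
(iii) `h² · E[(W h)² · 1{W h ≤ 0}] → 1` as `h → ∞`. -/
theorem stmt_4 {Ω : Type*} [MeasureSpace Ω] [IsProbabilityMeasure (ℙ : Measure Ω)]
    (W : ℝ → Ω → ℝ) (hmeas : ∀ h, Measurable (W h))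
    (p : ℝ → ℝ → ℝ)
    (hp : ∀ h x, p h x =
      (2 * Real.sqrt (2 * π) *
          ∫ u in Set.Iic (-h), (Real.sqrt (2 * π))⁻¹ * Real.exp (-u ^ 2 / 2))⁻¹ *
        Real.exp (-(if x ≤ 0 then (x - h) ^ 2 else (x + h) ^ 2) / 2))
    (hlaw : ∀ h : ℝ, 0 < h →
      Measure.map (W h) ℙ = volume.withDensity fun x => ENNReal.ofReal (p h x)) :
    (∀ h : ℝ, 0 < h → (ℙ {ω | W h ω ≤ 0}).toReal = 1 / 2) ∧
    Tendsto (fun h : ℝ => h * ∫ ω, (if W h ω ≤ 0 then W h ω else 0) ∂ℙ)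
      atTop (nhds (-(1 / 2))) ∧
    Tendsto (fun h : ℝ => h ^ 2 * ∫ ω, (if W h ω ≤ 0 then (W h ω) ^ 2 else 0) ∂ℙ)
      atTop (nhds 1) := by
  have hsqrt : Real.sqrt (2*π) ≠ 0 := ne_of_gt (Real.sqrt_pos.mpr (by positivity))
  have hnorm : ∀ h : ℝ,
      (2 * Real.sqrt (2 * π) *
        ∫ u in Set.Iic (-h), (Real.sqrt (2 * π))⁻¹ * Real.exp (-u ^ 2 / 2))⁻¹
      = (2 * QQ h)⁻¹ := by
    intro h
    rw [integral_const_mul, intIic_gauss,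
      show 2 * Real.sqrt (2*π) * ((Real.sqrt (2*π))⁻¹ * QQ h) = 2 * QQ h by
        field_simp]
  have hpeq : ∀ h x, x ≤ 0 → p h x = (2*QQ h)⁻¹ * Real.exp (-(x-h)^2/2) := by
    intro h x hx
    rw [hp h x, hnorm h, if_pos hx]
  have hintnonneg : ∀ h : ℝ,
      0 ≤ ∫ u in Set.Iic (-h), (Real.sqrt (2 * π))⁻¹ * Real.exp (-u ^ 2 / 2) := by
    intro h
    refine integral_nonneg fun u => ?_
    positivity
  have hpnonneg : ∀ h x, 0 ≤ p h x := by
    intro h x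
    rw [hp h x]
    refine mul_nonneg (inv_nonneg.mpr (mul_nonneg (by positivity) (hintnonneg h)))
      (Real.exp_pos _).le
  have hpmeas : ∀ h, Measurable (p h) := by
    intro h
    have h1 : Measurable fun x : ℝ => (if x ≤ 0 then (x - h)^2 else (x + h)^2) :=
      Measurable.ite measurableSet_Iic ((measurable_id.sub_const h).pow_const 2)
        ((measurable_id.add_const h).pow_const 2)
    have h2 : Measurable fun x : ℝ =>
        (2 * Real.sqrt (2 * π) *
          ∫ u in Set.Iic (-h), (Real.sqrt (2 * π))⁻¹ * Real.exp (-u ^ 2 / 2))⁻¹ *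
          Real.exp (-(if x ≤ 0 then (x - h) ^ 2 else (x + h) ^ 2) / 2) :=
      measurable_const.mul (Real.measurable_exp.comp (h1.neg.div_const 2))
    have : p h = fun x =>
        (2 * Real.sqrt (2 * π) *
          ∫ u in Set.Iic (-h), (Real.sqrt (2 * π))⁻¹ * Real.exp (-u ^ 2 / 2))⁻¹ *
          Real.exp (-(if x ≤ 0 then (x - h) ^ 2 else (x + h) ^ 2) / 2) :=
      funext fun x => hp h x
    rw [this]; exact h2
  have hshiftint : ∀ h : ℝ, Integrable fun x : ℝ => Real.exp (-(x-h)^2/2) := by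
    intro h
    exact gauss_int.comp_sub_right h
  have hIic_int : ∀ h : ℝ, IntegrableOn (p h) (Set.Iic 0) := by
    intro h
    have hbase : IntegrableOn (fun x : ℝ => (2*QQ h)⁻¹ * Real.exp (-(x-h)^2/2))
        (Set.Iic 0) := ((hshiftint h).const_mul _).integrableOn
    refine hbase.congr ?_
    filter_upwards [ae_restrict_mem measurableSet_Iic] with x hx
    exact (hpeq h x hx).symm
  -- the expectation computation
  have hExp : ∀ (h : ℝ), 0 < h → ∀ (q : ℝ → ℝ), Measurable q →
      IntegrableOn (fun x => p h x * q x) (Set.Iic 0) →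
      (∫ ω, (if W h ω ≤ 0 then q (W h ω) else 0) ∂ℙ)
        = ∫ x in Set.Iic 0, p h x * q x := by
    intro h hpos q hq _
    have hg : Measurable fun x : ℝ => if x ≤ 0 then q x else 0 :=
      Measurable.ite measurableSet_Iic hq measurable_const
    have step1 : (∫ ω, (if W h ω ≤ 0 then q (W h ω) else 0) ∂ℙ)
        = ∫ x, (if x ≤ 0 then q x else 0) ∂(Measure.map (W h) ℙ) :=
      (integral_map (hmeas h).aemeasurable hg.aestronglyMeasurable).symm
    rw [step1, hlaw h hpos]
    have step2 : (∫ x, (if x ≤ 0 then q x else 0)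
          ∂(volume.withDensity fun x => ENNReal.ofReal (p h x)))
        = ∫ x, (p h x).toNNReal • (if x ≤ 0 then q x else 0) := by
      exact integral_withDensity_eq_integral_smul (hpmeas h).real_toNNReal _
    rw [step2]
    have step3 : (∫ x, (p h x).toNNReal • (if x ≤ 0 then q x else 0))
        = ∫ x, Set.indicator (Set.Iic 0) (fun x => p h x * q x) x := by
      refine integral_congr_ae (Eventually.of_forall fun x => ?_)
      show (p h x).toNNReal • (if x ≤ 0 then q x else 0)
        = Set.indicator (Set.Iic 0) (fun x => p h x * q x) x
      rw [NNReal.smul_def, Real.coe_toNNReal _ (hpnonneg h x)]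
      by_cases hx : x ≤ 0
      · simp [Set.indicator_apply, Set.mem_Iic, hx, smul_eq_mul]
      · simp [Set.indicator_apply, Set.mem_Iic, hx, smul_eq_mul]
    rw [step3, integral_indicator measurableSet_Iic]
  have hQne : ∀ h : ℝ, QQ h ≠ 0 := fun h => (QQ_pos h).ne'
  refine ⟨?_, ?_, ?_⟩
  · -- part (i)
    intro h hpos
    have hset : {ω | W h ω ≤ 0} = W h ⁻¹' Set.Iic 0 := rfl
    rw [hset, ← Measure.map_apply (hmeas h) measurableSet_Iic, hlaw h hpos,
      withDensity_apply _ measurableSet_Iic,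
      ← ofReal_integral_eq_lintegral_ofReal (hIic_int h)
        (ae_of_all _ fun x => hpnonneg h x)]
    have : ∫ x in Set.Iic 0, p h x = 1/2 := by
      rw [setIntegral_congr_fun measurableSet_Iic (fun x hx => hpeq h x hx),
        integral_const_mul, IA]
      field_simp [hQne h]
    rw [this]
    rw [ENNReal.toReal_ofReal (by norm_num)]
  · -- part (ii)
    have lim : Tendsto (fun h : ℝ => (-(1/2 : ℝ)) * (h * (EE h / QQ h - h)))
        atTop (𝓝 (-(1/2 : ℝ))) := by
      have := limit_ii.const_mul (-(1/2 : ℝ))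
      simpa using this
    refine lim.congr' ?_
    filter_upwards [eventually_ge_atTop (1:ℝ)] with h hh
    have hpos : (0:ℝ) < h := lt_of_lt_of_le one_pos hh
    have hq : Measurable fun x : ℝ => x := measurable_id
    have hint : IntegrableOn (fun x => p h x * x) (Set.Iic 0) := by
      have hbase : IntegrableOn
          (fun x : ℝ => (2*QQ h)⁻¹ * (x * Real.exp (-(x-h)^2/2))) (Set.Iic 0) := by
        have : Integrable fun x : ℝ => x * Real.exp (-(x-h)^2/2) := by
          have h1 := gauss_int1.comp_sub_right h
          have h2 := (gauss_int.comp_sub_right h).const_mul h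
          have := h1.add h2
          refine this.congr (Eventually.of_forall fun x => ?_)
          simp only [Pi.add_apply]
          ring
        exact (this.const_mul _).integrableOn
      refine hbase.congr ?_
      filter_upwards [ae_restrict_mem measurableSet_Iic] with x hx
      rw [hpeq h x hx]; ring
    rw [hExp h hpos (fun x => x) hq hint]
    have : ∫ x in Set.Iic 0, p h x * x = (2*QQ h)⁻¹ * (h * QQ h - EE h) := by
      rw [setIntegral_congr_fun measurableSet_Iic
        (fun x hx => by rw [hpeq h x hx]; ring :
          ∀ x ∈ Set.Iic (0:ℝ), p h x * x = (2*QQ h)⁻¹ * (x * Real.exp (-(x-h)^2/2))),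
        integral_const_mul, IB]
    rw [this]
    field_simp [hQne h]
    ring
  · -- part (iii)
    have lim : Tendsto (fun h : ℝ => (-(1/2 : ℝ)) * (h^3 * (EE h / QQ h) - h^4 - h^2))
        atTop (𝓝 (1 : ℝ)) := by
      have := limit_iii.const_mul (-(1/2 : ℝ))
      norm_num at this
      refine this.congr fun k => by ring
    refine lim.congr' ?_
    filter_upwards [eventually_ge_atTop (1:ℝ)] with h hh
    have hpos : (0:ℝ) < h := lt_of_lt_of_le one_pos hh
    have hq : Measurable fun x : ℝ => x^2 := measurable_id.pow_const 2
    have hint : IntegrableOn (fun x => p h x * x^2) (Set.Iic 0) := by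
      have hbase : IntegrableOn
          (fun x : ℝ => (2*QQ h)⁻¹ * (x^2 * Real.exp (-(x-h)^2/2))) (Set.Iic 0) := by
        have : Integrable fun x : ℝ => x^2 * Real.exp (-(x-h)^2/2) := by
          have h1 := gauss_int2.comp_sub_right h
          have h2 := (gauss_int1.comp_sub_right h).const_mul (2*h)
          have h3 := (gauss_int.comp_sub_right h).const_mul (h^2)
          have := (h1.add h2).add h3
          refine this.congr (Eventually.of_forall fun x => ?_)
          simp only [Pi.add_apply]
          ring
        exact (this.const_mul _).integrableOn
      refine hbase.congr ?_
      filter_upwards [ae_restrict_mem measurableSet_Iic] with x hx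
      rw [hpeq h x hx]; ring
    rw [hExp h hpos (fun x => x^2) hq hint]
    have : ∫ x in Set.Iic 0, p h x * x^2 = (2*QQ h)⁻¹ * ((1+h^2) * QQ h - h * EE h) := by
      rw [setIntegral_congr_fun measurableSet_Iic
        (fun x hx => by rw [hpeq h x hx]; ring :
          ∀ x ∈ Set.Iic (0:ℝ), p h x * x^2 = (2*QQ h)⁻¹ * (x^2 * Real.exp (-(x-h)^2/2))),
        integral_const_mul, IC]
    rw [this]
    field_simp [hQne h]
    ring
end

section
/- Let |θ| < 1, let (ε_t) be i.i.d. with mean zero and variance σ², let X_0 = 0, ε_0 = 0, and X_t = X_{t−1} + ε_t − θε_{t−1}. Fix τ ∈ ℝ and a positive integer k, and define D_{n,k} = n^{−1}·∂ℓ/∂φ_{1,1} − A_{n,k}, where n^{−1}∂ℓ/∂φ_{1,1} = n^{−1/2} Σ_{t=1}^{n} (ε_t/σ) Σ_{j=0}^{t−1} θ^j (X_{t−1−j}/(n^{1/2}σ)) 1{X_{t−1−j} ≤ n^{1/2}(1−θ)στ} and A_{n,k} is the same double sum but with t ranging from k+1 to n and j from 0 to k. Then E[D_{n,k}] = 0 and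 Var(D_{n,k}) ≤ (K/(1−|θ|)²)·{k(k−1)/(2n²) + |θ|^{k+1}/2}, where K > 0 is any constant with E[X_t²] ≤ tKσ² for all t ≥ 1. -/
open MeasureTheory ProbabilityTheory Finset

namespace Stmt12

/-- index set of the `j`-sum for the difference `D`. -/
def J (k t : ℕ) : Finset ℕ := if t ≤ k then range t else Ico (k+1) t

/-- innovations as a function of the path `v i = ε (i+1)`. -/
def ef (m : ℕ) (v : ℕ → ℝ) : ℝ := if m = 0 then 0 else v (m-1)

noncomputable def Xf (θ : ℝ) : ℕ → (ℕ → ℝ) → ℝ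
  | 0, _ => 0
  | (s+1), v => Xf θ s v + ef (s+1) v - θ * ef s v

noncomputable def Gf (θ c d : ℝ) (k s : ℕ) (v : ℕ → ℝ) : ℝ :=
  ∑ j ∈ J k s, θ^j * ((Xf θ (s-1-j) v / d) * (if Xf θ (s-1-j) v ≤ c then 1 else 0))

lemma measurable_ef (m : ℕ) : Measurable (ef m) := by
  unfold ef; split
  · exact measurable_const
  · exact measurable_pi_apply _

lemma measurable_Xf (θ : ℝ) (s : ℕ) : Measurable (Xf θ s) := by
  induction s with
  | zero => exact measurable_const
  | succ s ih => exact (ih.add (measurable_ef _)).sub ((measurable_ef _).const_mul θ)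

lemma measurable_Gf (θ c d : ℝ) (k s : ℕ) : Measurable (Gf θ c d k s) := by
  apply Finset.measurable_sum
  intro j _
  have h1 : Measurable (fun v => Xf θ (s-1-j) v / d) := (measurable_Xf θ _).div_const d
  have h2 : Measurable (fun v => (if Xf θ (s-1-j) v ≤ c then (1:ℝ) else 0)) :=
    Measurable.ite (measurableSet_le (measurable_Xf θ _) measurable_const)
      measurable_const measurable_const
  exact (h1.mul h2).const_mul _

lemma indep_past {Ω : Type*} [MeasureSpace Ω] [IsProbabilityMeasure (ℙ : Measure Ω)]
    (ε : ℕ → Ω → ℝ) (hmeas : ∀ t, Measurable (ε t))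
    (hindep : iIndepFun (fun t => ε (t + 1)) ℙ)
    (t : ℕ) (ht : 1 ≤ t) (ψ : (ℕ → ℝ) → ℝ) (hψ : Measurable ψ) :
    IndepFun (ε t) (fun ω => ψ (fun i => if i + 1 < t then ε (i+1) ω else 0)) ℙ := by
  classical
  have hdisj : Disjoint ({t-1} : Finset ℕ) (range (t-1)) := by
    simp [Finset.disjoint_singleton_left]
  have h := hindep.indepFun_finset {t-1} (range (t-1)) hdisj (fun i => hmeas (i+1))
  have hmem : (t-1) ∈ ({t-1} : Finset ℕ) := Finset.mem_singleton_self _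
  have hφ1 : Measurable (fun v : (({t-1} : Finset ℕ) → ℝ) => v ⟨t-1, hmem⟩) :=
    measurable_pi_apply _
  have hΦ : Measurable (fun v : ((range (t-1) : Finset ℕ) → ℝ) =>
      (fun i => if h : i ∈ range (t-1) then v ⟨i, h⟩ else 0 : ℕ → ℝ)) := by
    apply measurable_pi_lambda
    intro i
    by_cases h : i ∈ range (t-1)
    · simp only [h, dif_pos]; exact measurable_pi_apply _
    · simp only [h, dif_neg, not_false_iff]; exact measurable_const
  have h2 := h.comp hφ1 (hψ.comp hΦ)
  have e1 : ((fun v : (({t-1} : Finset ℕ) → ℝ) => v ⟨t-1, hmem⟩) ∘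
      (fun ω (i : ({t-1} : Finset ℕ)) => ε (i+1) ω)) = ε t := by
    funext ω
    simp only [Function.comp_apply]
    congr 1
    omega
  have e2 : ((ψ ∘ (fun v : ((range (t-1) : Finset ℕ) → ℝ) =>
      (fun i => if h : i ∈ range (t-1) then v ⟨i, h⟩ else 0 : ℕ → ℝ))) ∘
      (fun ω (i : (range (t-1) : Finset ℕ)) => ε (i+1) ω)) =
      (fun ω => ψ (fun i => if i + 1 < t then ε (i+1) ω else 0)) := by
    funext ω
    simp only [Function.comp_apply]
    congr 1
    funext i
    by_cases hi : i + 1 < t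
    · rw [if_pos hi, dif_pos (by simp only [Finset.mem_range]; omega)]
    · rw [if_neg hi, dif_neg (by simp only [Finset.mem_range]; omega)]
  rw [e1, e2] at h2
  exact h2

lemma integrable_mul_of_L2 {Ω : Type*} [MeasureSpace Ω] [IsProbabilityMeasure (ℙ : Measure Ω)]
    {f g : Ω → ℝ} (hf : MemLp f 2 ℙ) (hg : MemLp g 2 ℙ) :
    Integrable (fun ω => f ω * g ω) ℙ := by
  have hf2 : Integrable (fun ω => f ω ^ 2) ℙ := (memLp_two_iff_integrable_sq hf.1).1 hf
  have hg2 : Integrable (fun ω => g ω ^ 2) ℙ := (memLp_two_iff_integrable_sq hg.1).1 hg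
  refine Integrable.mono' (hf2.add hg2) (hf.1.mul hg.1) ?_
  filter_upwards with ω
  simp only [Pi.add_apply]
  rw [Real.norm_eq_abs, abs_mul]
  nlinarith [sq_nonneg (|f ω| - |g ω|), sq_abs (f ω), sq_abs (g ω),
    abs_nonneg (f ω), abs_nonneg (g ω)]

lemma geom_le {r : ℝ} (h0 : 0 ≤ r) (h1 : r < 1) (m : ℕ) :
    ∑ j ∈ range m, r^j ≤ (1-r)⁻¹ := by
  have hpos : (0:ℝ) < 1 - r := by linarith
  rw [inv_eq_one_div, le_div_iff₀ hpos]
  nlinarith [geom_sum_mul r m, pow_nonneg h0 m]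

end Stmt12

set_option maxHeartbeats 2000000

/-- For the IMA(1,1) process `X 0 = 0`, `ε 0 = 0`,
`X (t+1) = X t + ε (t+1) - θ ε t` with i.i.d. innovations (`t ≥ 1`) of mean 0 and
variance `σ²`, `|θ| < 1`, fix `τ ∈ ℝ` and `k`, and set
`D = n⁻¹ ∂ℓ/∂φ₁₁ - A_{n,k}` as in the text.  Then `E[D] = 0` and
`Var(D) ≤ (K/(1-|θ|)²)·(k(k-1)/(2n²) + |θ|^{k+1}/2)` for any `K > 0` with
`E[X_t²] ≤ t K σ²` for all `t ≥ 1`. -/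
theorem stmt_12 {Ω : Type*} [MeasureSpace Ω] [IsProbabilityMeasure (ℙ : Measure Ω)]
    (θ σ τ : ℝ) (hθ : |θ| < 1) (hσ : 0 < σ)
    (ε : ℕ → Ω → ℝ) (hε0 : ∀ ω, ε 0 ω = 0)
    (hmeas : ∀ t, Measurable (ε t))
    (hindep : iIndepFun (fun t => ε (t + 1)) ℙ)
    (hid : ∀ s t, Measure.map (ε (s + 1)) ℙ = Measure.map (ε (t + 1)) ℙ)
    (hL2 : ∀ t, MemLp (ε (t + 1)) 2 ℙ)
    (hmean : ∀ t, ∫ ω, ε (t + 1) ω ∂ℙ = 0)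
    (hvar : ∀ t, ∫ ω, (ε (t + 1) ω) ^ 2 ∂ℙ = σ ^ 2)
    (X : ℕ → Ω → ℝ) (hX0 : ∀ ω, X 0 ω = 0)
    (hXrec : ∀ t ω, X (t + 1) ω = X t ω + ε (t + 1) ω - θ * ε t ω)
    (K : ℝ) (hK : 0 < K) (hKbd : ∀ t : ℕ, 1 ≤ t → ∫ ω, (X t ω) ^ 2 ∂ℙ ≤ t * K * σ ^ 2)
    (k n : ℕ) (hn : 1 ≤ n)
    (L A D : Ω → ℝ)
    (hL : ∀ ω, L ω = (Real.sqrt n)⁻¹ * ∑ t ∈ Icc 1 n, (ε t ω / σ) *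
      ∑ j ∈ range t, θ ^ j * (X (t - 1 - j) ω / (Real.sqrt n * σ)) *
        (if X (t - 1 - j) ω ≤ Real.sqrt n * (1 - θ) * σ * τ then 1 else 0))
    (hA : ∀ ω, A ω = (Real.sqrt n)⁻¹ * ∑ t ∈ Icc (k + 1) n, (ε t ω / σ) *
      ∑ j ∈ range (k + 1), θ ^ j * (X (t - 1 - j) ω / (Real.sqrt n * σ)) *
        (if X (t - 1 - j) ω ≤ Real.sqrt n * (1 - θ) * σ * τ then 1 else 0))
    (hD : ∀ ω, D ω = L ω - A ω) :
    ∫ ω, D ω ∂ℙ = 0 ∧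
    ∫ ω, (D ω) ^ 2 ∂ℙ - (∫ ω, D ω ∂ℙ) ^ 2 ≤
      (K / (1 - |θ|) ^ 2) * ((k : ℝ) * ((k : ℝ) - 1) / (2 * (n : ℝ) ^ 2) + |θ| ^ (k + 1) / 2) := by
  classical
  have hnR : (0:ℝ) < n := by exact_mod_cast hn
  have hsn : (0:ℝ) < Real.sqrt n := Real.sqrt_pos.2 hnR
  have hsq_n : Real.sqrt n ^ 2 = (n:ℝ) := Real.sq_sqrt hnR.le
  have hθ0 : (0:ℝ) ≤ |θ| := abs_nonneg θ
  have h1θ : (0:ℝ) < 1 - |θ| := by linarith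
  set c : ℝ := Real.sqrt n * (1 - θ) * σ * τ with hcdef
  set d : ℝ := Real.sqrt n * σ with hddef
  have hd0 : (0:ℝ) < d := mul_pos hsn hσ
  set g : ℕ → Ω → ℝ := fun t ω => ∑ j ∈ Stmt12.J k t,
      θ ^ j * (X (t - 1 - j) ω / d * (if X (t - 1 - j) ω ≤ c then 1 else 0)) with hgdef
  set M : ℕ → Ω → ℝ := fun t ω => (ε t ω / σ) * g t ω with hMdef
  set e : ℕ → Ω → ℕ → ℝ := fun t ω i => if i + 1 < t then ε (i+1) ω else 0 with hedef
  -- basic facts about means/variances of ε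
  have hmean0 : ∀ t, 1 ≤ t → ∫ ω, ε t ω ∂ℙ = 0 := by
    intro t ht
    match t with
    | 0 => omega
    | (s+1) => exact hmean s
  have hvar0 : ∀ t, 1 ≤ t → ∫ ω, (ε t ω) ^ 2 ∂ℙ = σ ^ 2 := by
    intro t ht
    match t with
    | 0 => omega
    | (s+1) => exact hvar s
  -- measurability
  have hXmeas : ∀ m, Measurable (X m) := by
    intro m
    induction m with
    | zero =>
      have h : X 0 = fun _ => (0:ℝ) := funext hX0
      rw [h]; exact measurable_const
    | succ s ih =>
      have h : X (s+1) = fun ω => X s ω + ε (s+1) ω - θ * ε s ω := funext (hXrec s)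
      rw [h]; exact (ih.add (hmeas _)).sub ((hmeas _).const_mul θ)
  have hbmeas : ∀ m, Measurable (fun ω => X m ω / d * (if X m ω ≤ c then (1:ℝ) else 0)) := by
    intro m
    exact ((hXmeas m).div_const d).mul
      (Measurable.ite (measurableSet_le (hXmeas m) measurable_const)
        measurable_const measurable_const)
  have hgmeas : ∀ t, Measurable (g t) := by
    intro t
    simp only [hgdef]
    exact Finset.measurable_sum _ fun j _ => ((hbmeas _).const_mul _)
  have hMmeas : ∀ t, Measurable (M t) := by
    intro t
    simp only [hMdef]
    exact ((hmeas t).div_const σ).mul (hgmeas t)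
  have hemeas : ∀ t, Measurable (e t) := by
    intro t
    simp only [hedef]
    apply measurable_pi_lambda
    intro i
    by_cases h : i + 1 < t
    · simp only [h, if_true]; exact hmeas _
    · simp only [h, if_false]; exact measurable_const
  -- L² facts
  have hεL2 : ∀ m, MemLp (ε m) 2 ℙ := by
    intro m
    match m with
    | 0 =>
      have h : ε 0 = fun _ => (0:ℝ) := funext hε0
      rw [h]; exact memLp_const 0
    | (s+1) => exact hL2 s
  have hXL2 : ∀ m, MemLp (X m) 2 ℙ := by
    intro m
    induction m with
    | zero =>
      have h : X 0 = fun _ => (0:ℝ) := funext hX0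
      rw [h]; exact memLp_const 0
    | succ s ih =>
      have h : X (s+1) = fun ω => X s ω + ε (s+1) ω - θ * ε s ω := funext (hXrec s)
      rw [h]
      exact (ih.add (hεL2 (s+1))).sub ((hεL2 s).const_mul θ)
  have hbL2 : ∀ m, MemLp (fun ω => X m ω / d * (if X m ω ≤ c then (1:ℝ) else 0)) 2 ℙ := by
    intro m
    refine MemLp.of_le ((hXL2 m).const_mul d⁻¹) (hbmeas m).aestronglyMeasurable ?_
    filter_upwards with ω
    rw [Real.norm_eq_abs, Real.norm_eq_abs]
    have h1 : X m ω / d * (if X m ω ≤ c then (1:ℝ) else 0) =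
        (d⁻¹ * X m ω) * (if X m ω ≤ c then (1:ℝ) else 0) := by ring
    rw [h1, abs_mul]
    have h2 : |(if X m ω ≤ c then (1:ℝ) else 0)| ≤ 1 := by split_ifs <;> simp
    exact mul_le_of_le_one_right (abs_nonneg _) h2
  have hgL2 : ∀ t, MemLp (g t) 2 ℙ := by
    intro t
    have h : MemLp (fun ω => ∑ j ∈ Stmt12.J k t,
        θ ^ j * (X (t-1-j) ω / d * (if X (t-1-j) ω ≤ c then (1:ℝ) else 0))) 2 ℙ :=
      memLp_finset_sum _ (fun j _ => (hbL2 (t-1-j)).const_mul (θ^j))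
    simpa only [hgdef] using h
  -- representation of D
  have hDrep : ∀ ω, D ω = (Real.sqrt n)⁻¹ * ∑ t ∈ Icc 1 n, M t ω := by
    intro ω
    rw [hD ω, hL ω, hA ω, ← mul_sub]
    congr 1
    have hinner : ∀ (t : ℕ) (jset : Finset ℕ),
        (∑ j ∈ jset, θ ^ j * (X (t - 1 - j) ω / d) * (if X (t - 1 - j) ω ≤ c then (1:ℝ) else 0)) =
        ∑ j ∈ jset, θ ^ j * (X (t - 1 - j) ω / d * (if X (t - 1 - j) ω ≤ c then (1:ℝ) else 0)) :=
      fun t jset => Finset.sum_congr rfl fun j _ => mul_assoc _ _ _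
    have h1 : ∀ f : ℕ → ℝ, ∑ t ∈ Icc (k+1) n, f t =
        ∑ t ∈ Icc 1 n, (if k+1 ≤ t then f t else 0) := by
      intro f
      rw [show Icc (k+1) n = (Icc 1 n).filter (fun t => k+1 ≤ t) from by
        ext x; simp only [mem_Icc, mem_filter]; omega]
      exact Finset.sum_filter _ _
    rw [h1, ← Finset.sum_sub_distrib]
    apply Finset.sum_congr rfl
    intro t htm
    obtain ⟨ht1, htn⟩ := mem_Icc.1 htm
    by_cases htk : t ≤ k
    · rw [if_neg (by omega), sub_zero]
      simp only [hMdef, hgdef, Stmt12.J, if_pos htk]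
      rw [hinner]
    · rw [if_pos (by omega), ← mul_sub]
      simp only [hMdef, hgdef, Stmt12.J, if_neg htk]
      congr 1
      rw [hinner, hinner]
      rw [Finset.range_eq_Ico,
        ← Finset.sum_Ico_consecutive _ (Nat.zero_le (k+1)) (by omega : k+1 ≤ t)]
      simp only [← Finset.range_eq_Ico]
      ring
  -- factorization through the past
  have hεe : ∀ t m, m < t → ∀ ω, ε m ω = Stmt12.ef m (e t ω) := by
    intro t m hm ω
    match m with
    | 0 => simp [Stmt12.ef, hε0]
    | (m+1) =>
      have h : Stmt12.ef (m+1) (e t ω) = e t ω m := by simp [Stmt12.ef]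
      rw [h]
      simp only [hedef]
      rw [if_pos hm]
  have hXe : ∀ t m, m < t → ∀ ω, X m ω = Stmt12.Xf θ m (e t ω) := by
    intro t m
    induction m with
    | zero => intro _ ω; simp [Stmt12.Xf, hX0]
    | succ s ih =>
      intro hm ω
      rw [hXrec s ω]
      rw [show Stmt12.Xf θ (s+1) (e t ω) = Stmt12.Xf θ s (e t ω) +
        Stmt12.ef (s+1) (e t ω) - θ * Stmt12.ef s (e t ω) from rfl]
      rw [← ih (by omega) ω, ← hεe t (s+1) hm ω, ← hεe t s (by omega) ω]
  have hge : ∀ t m, 1 ≤ t → m ≤ t → ∀ ω, g m ω = Stmt12.Gf θ c d k m (e t ω) := by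
    intro t m ht hm ω
    simp only [hgdef, Stmt12.Gf]
    apply Finset.sum_congr rfl
    intro j _
    rw [← hXe t (m-1-j) (by omega) ω]
  -- independence
  have hMindep : ∀ t, 1 ≤ t → ∀ ψ : (ℕ → ℝ) → ℝ, Measurable ψ →
      IndepFun (ε t) (fun ω => ψ (e t ω)) ℙ := by
    intro t ht ψ hψ
    have h := Stmt12.indep_past ε hmeas hindep t ht ψ hψ
    simp only [hedef]
    exact h
  have hWindep : ∀ t, 1 ≤ t → IndepFun (ε t) (fun ω => σ⁻¹ * g t ω) ℙ := by
    intro t ht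
    have h := hMindep t ht (fun v => σ⁻¹ * Stmt12.Gf θ c d k t v)
      ((Stmt12.measurable_Gf θ c d k t).const_mul σ⁻¹)
    refine h.congr (Filter.EventuallyEq.refl _ _) ?_
    filter_upwards with ω
    show σ⁻¹ * Stmt12.Gf θ c d k t (e t ω) = σ⁻¹ * g t ω
    rw [← hge t t ht le_rfl ω]
  -- integrability of M t and squares
  have hεsqint : ∀ t, Integrable (fun ω => (ε t ω) ^ 2) ℙ :=
    fun t => (memLp_two_iff_integrable_sq (hεL2 t).1).1 (hεL2 t)
  have hgsqint : ∀ t, Integrable (fun ω => (g t ω) ^ 2) ℙ :=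
    fun t => (memLp_two_iff_integrable_sq (hgL2 t).1).1 (hgL2 t)
  have hsqindep : ∀ t, 1 ≤ t →
      IndepFun (fun ω => (ε t ω) ^ 2) (fun ω => (σ⁻¹ * g t ω) ^ 2) ℙ := by
    intro t ht
    exact (hWindep t ht).comp (measurable_id.pow_const 2) (measurable_id.pow_const 2)
  have hWL2 : ∀ t, MemLp (fun ω => σ⁻¹ * g t ω) 2 ℙ := fun t => (hgL2 t).const_mul σ⁻¹
  have hWsqint : ∀ t, Integrable (fun ω => (σ⁻¹ * g t ω) ^ 2) ℙ :=
    fun t => (memLp_two_iff_integrable_sq (hWL2 t).1).1 (hWL2 t)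
  have hML2 : ∀ t, 1 ≤ t → MemLp (M t) 2 ℙ := by
    intro t ht
    have hI3 : Integrable (fun ω => (ε t ω) ^2 * (σ⁻¹ * g t ω)^2) ℙ := by
      exact (hsqindep t ht).integrable_mul (hεsqint t) (hWsqint t)
    have hMeq : (fun ω => M t ω ^ 2) = fun ω => (ε t ω) ^2 * (σ⁻¹ * g t ω)^2 := by
      funext ω
      simp only [hMdef]
      rw [div_eq_mul_inv]
      ring
    refine (memLp_two_iff_integrable_sq (hMmeas t).aestronglyMeasurable).2 ?_
    rw [hMeq]; exact hI3
  have hMint : ∀ t, 1 ≤ t → Integrable (M t) ℙ :=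
    fun t ht => (hML2 t ht).integrable (by norm_num)
  -- E[M t] = 0
  have hMzero : ∀ t, 1 ≤ t → ∫ ω, M t ω ∂ℙ = 0 := by
    intro t ht
    have h4 : ∫ ω, ε t ω * (σ⁻¹ * g t ω) ∂ℙ =
        (∫ ω, ε t ω ∂ℙ) * ∫ ω, σ⁻¹ * g t ω ∂ℙ := by
      exact (hWindep t ht).integral_fun_mul_eq_mul_integral (hmeas t).aestronglyMeasurable
        ((hgmeas t).const_mul σ⁻¹).aestronglyMeasurable
    have h5 : ∀ ω, M t ω = ε t ω * (σ⁻¹ * g t ω) := by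
      intro ω; simp only [hMdef]; rw [div_eq_mul_inv]; ring
    calc ∫ ω, M t ω ∂ℙ = ∫ ω, ε t ω * (σ⁻¹ * g t ω) ∂ℙ :=
          integral_congr_ae (Filter.Eventually.of_forall h5)
      _ = (∫ ω, ε t ω ∂ℙ) * ∫ ω, σ⁻¹ * g t ω ∂ℙ := h4
      _ = 0 := by rw [hmean0 t ht, zero_mul]
  -- cross terms vanish
  have hMcross : ∀ s t, 1 ≤ s → s < t → ∫ ω, M s ω * M t ω ∂ℙ = 0 := by
    intro s t hs hst
    have ht : 1 ≤ t := by omega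
    set ψ : (ℕ → ℝ) → ℝ := fun v =>
      Stmt12.ef s v / σ * Stmt12.Gf θ c d k s v * (σ⁻¹ * Stmt12.Gf θ c d k t v) with hψdef
    have hψm : Measurable ψ := by
      exact (((Stmt12.measurable_ef s).div_const σ).mul
        (Stmt12.measurable_Gf θ c d k s)).mul
        ((Stmt12.measurable_Gf θ c d k t).const_mul σ⁻¹)
    have heq : ∀ ω, M s ω * M t ω = ε t ω * ψ (e t ω) := by
      intro ω
      have h1 : Stmt12.ef s (e t ω) = ε s ω := (hεe t s hst ω).symm
      have h2 : Stmt12.Gf θ c d k s (e t ω) = g s ω := (hge t s ht (by omega) ω).symm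
      have h3 : Stmt12.Gf θ c d k t (e t ω) = g t ω := (hge t t ht le_rfl ω).symm
      simp only [hψdef, h1, h2, h3, hMdef]
      rw [div_eq_mul_inv, div_eq_mul_inv]
      ring
    have h4 : ∫ ω, ε t ω * ψ (e t ω) ∂ℙ =
        (∫ ω, ε t ω ∂ℙ) * ∫ ω, ψ (e t ω) ∂ℙ := by
      exact (hMindep t ht ψ hψm).integral_fun_mul_eq_mul_integral (hmeas t).aestronglyMeasurable
        (hψm.comp (hemeas t)).aestronglyMeasurable
    calc ∫ ω, M s ω * M t ω ∂ℙ = ∫ ω, ε t ω * ψ (e t ω) ∂ℙ :=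
          integral_congr_ae (Filter.Eventually.of_forall heq)
      _ = (∫ ω, ε t ω ∂ℙ) * ∫ ω, ψ (e t ω) ∂ℙ := h4
      _ = 0 := by rw [hmean0 t ht, zero_mul]
  -- diagonal terms
  have hMsq_eq : ∀ t, 1 ≤ t → ∫ ω, M t ω ^ 2 ∂ℙ = ∫ ω, g t ω ^ 2 ∂ℙ := by
    intro t ht
    have hMeq : ∀ ω, M t ω ^ 2 = (ε t ω) ^2 * (σ⁻¹ * g t ω)^2 := by
      intro ω; simp only [hMdef]; rw [div_eq_mul_inv]; ring
    have h4 : ∫ ω, (ε t ω)^2 * (σ⁻¹ * g t ω)^2 ∂ℙ =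
        (∫ ω, (ε t ω)^2 ∂ℙ) * ∫ ω, (σ⁻¹ * g t ω)^2 ∂ℙ := by
      exact (hsqindep t ht).integral_fun_mul_eq_mul_integral
        ((hmeas t).pow_const 2).aestronglyMeasurable
        (((hgmeas t).const_mul σ⁻¹).pow_const 2).aestronglyMeasurable
    have h5 : ∀ ω, (σ⁻¹ * g t ω)^2 = (σ⁻¹)^2 * g t ω ^ 2 := fun ω => by ring
    calc ∫ ω, M t ω ^ 2 ∂ℙ = ∫ ω, (ε t ω)^2 * (σ⁻¹ * g t ω)^2 ∂ℙ :=
          integral_congr_ae (Filter.Eventually.of_forall hMeq)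
      _ = (∫ ω, (ε t ω)^2 ∂ℙ) * ∫ ω, (σ⁻¹ * g t ω)^2 ∂ℙ := h4
      _ = σ^2 * ∫ ω, (σ⁻¹)^2 * g t ω ^2 ∂ℙ := by
          rw [hvar0 t ht]
          congr 1
          exact integral_congr_ae (Filter.Eventually.of_forall h5)
      _ = σ^2 * ((σ⁻¹)^2 * ∫ ω, g t ω ^2 ∂ℙ) := by rw [integral_const_mul]
      _ = ∫ ω, g t ω ^2 ∂ℙ := by
          rw [← mul_assoc]
          have : σ^2 * (σ⁻¹)^2 = 1 := by
            field_simp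
          rw [this, one_mul]
  -- part (a)
  have hint_D : ∫ ω, D ω ∂ℙ = 0 := by
    have h1 : (fun ω => D ω) = fun ω => (Real.sqrt n)⁻¹ * ∑ t ∈ Icc 1 n, M t ω :=
      funext hDrep
    calc ∫ ω, D ω ∂ℙ = ∫ ω, (Real.sqrt n)⁻¹ * ∑ t ∈ Icc 1 n, M t ω ∂ℙ :=
          integral_congr_ae (Filter.Eventually.of_forall hDrep)
      _ = (Real.sqrt n)⁻¹ * ∫ ω, ∑ t ∈ Icc 1 n, M t ω ∂ℙ := integral_const_mul _ _
      _ = (Real.sqrt n)⁻¹ * ∑ t ∈ Icc 1 n, ∫ ω, M t ω ∂ℙ := by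
          rw [integral_finset_sum _ (fun t htm => hMint t (mem_Icc.1 htm).1)]
      _ = 0 := by
          rw [Finset.sum_congr rfl (fun t htm => hMzero t (mem_Icc.1 htm).1)]
          simp
  refine ⟨hint_D, ?_⟩
  rw [hint_D]
  -- now bound ∫ D²
  have hDsq : ∫ ω, D ω ^ 2 ∂ℙ = (n:ℝ)⁻¹ * ∑ t ∈ Icc 1 n, ∫ ω, M t ω ^ 2 ∂ℙ := by
    have h1 : ∀ ω, D ω ^ 2 = (n:ℝ)⁻¹ * ∑ t ∈ Icc 1 n, ∑ s ∈ Icc 1 n, M t ω * M s ω := by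
      intro ω
      rw [hDrep ω, mul_pow, inv_pow, hsq_n, pow_two, Finset.sum_mul_sum]
    calc ∫ ω, D ω ^ 2 ∂ℙ
        = ∫ ω, (n:ℝ)⁻¹ * ∑ t ∈ Icc 1 n, ∑ s ∈ Icc 1 n, M t ω * M s ω ∂ℙ :=
          integral_congr_ae (Filter.Eventually.of_forall h1)
      _ = (n:ℝ)⁻¹ * ∫ ω, ∑ t ∈ Icc 1 n, ∑ s ∈ Icc 1 n, M t ω * M s ω ∂ℙ :=
          integral_const_mul _ _
      _ = (n:ℝ)⁻¹ * ∑ t ∈ Icc 1 n, ∫ ω, ∑ s ∈ Icc 1 n, M t ω * M s ω ∂ℙ := by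
          rw [integral_finset_sum _ (fun t htm => integrable_finset_sum _ (fun s hsm =>
            Stmt12.integrable_mul_of_L2 (hML2 t (mem_Icc.1 htm).1) (hML2 s (mem_Icc.1 hsm).1)))]
      _ = (n:ℝ)⁻¹ * ∑ t ∈ Icc 1 n, ∫ ω, M t ω ^ 2 ∂ℙ := by
          congr 1
          apply Finset.sum_congr rfl
          intro t htm
          rw [integral_finset_sum _ (fun s hsm =>
            Stmt12.integrable_mul_of_L2 (hML2 t (mem_Icc.1 htm).1) (hML2 s (mem_Icc.1 hsm).1))]
          have hsingle := Finset.sum_eq_single (s := Icc 1 n)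
            (f := fun s => ∫ ω, M t ω * M s ω ∂ℙ) t
            (fun s hsm hne => by
              show ∫ ω, M t ω * M s ω ∂ℙ = 0
              rcases hne.lt_or_gt with hlt | hlt
              · have hcomm : ∫ ω, M t ω * M s ω ∂ℙ = ∫ ω, M s ω * M t ω ∂ℙ :=
                  integral_congr_ae (Filter.Eventually.of_forall fun ω => mul_comm _ _)
                rw [hcomm]
                exact hMcross s t (mem_Icc.1 hsm).1 hlt
              · exact hMcross t s (mem_Icc.1 htm).1 hlt)
            (fun hnot => absurd htm hnot)
          rw [hsingle]
          exact integral_congr_ae (Filter.Eventually.of_forall fun ω => (pow_two _).symm)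
  -- second moment of X
  have hXsqint : ∀ m, Integrable (fun ω => (X m ω) ^ 2) ℙ :=
    fun m => (memLp_two_iff_integrable_sq (hXL2 m).1).1 (hXL2 m)
  have hbbsq_int : ∀ m,
      Integrable (fun ω => (X m ω / d * (if X m ω ≤ c then (1:ℝ) else 0))^2) ℙ :=
    fun m => (memLp_two_iff_integrable_sq (hbL2 m).1).1 (hbL2 m)
  have hXsq : ∀ m : ℕ, ∫ ω, (X m ω) ^ 2 ∂ℙ ≤ (m:ℝ) * K * σ^2 := by
    intro m
    match m with
    | 0 =>
      have h : (fun ω => X 0 ω ^ 2) = fun _ => (0:ℝ) := funext fun ω => by rw [hX0]; ring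
      rw [h]; simp
    | (m+1) => exact hKbd (m+1) (by omega)
  have hbbsq : ∀ (t : ℕ), 1 ≤ t → ∀ j : ℕ,
      ∫ ω, (X (t-1-j) ω / d * (if X (t-1-j) ω ≤ c then (1:ℝ) else 0))^2 ∂ℙ ≤
        ((t:ℝ)-1) * K / n := by
    intro t ht j
    have hmt : ((t-1-j : ℕ):ℝ) ≤ (t:ℝ) - 1 := by
      have h1 : t - 1 - j ≤ t - 1 := by omega
      have h2 : ((t-1-j:ℕ):ℝ) ≤ ((t-1:ℕ):ℝ) := Nat.cast_le.2 h1
      rwa [Nat.cast_sub ht, Nat.cast_one] at h2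
    have hpt : ∀ ω, (X (t-1-j) ω / d * (if X (t-1-j) ω ≤ c then (1:ℝ) else 0))^2 ≤
        (d⁻¹)^2 * (X (t-1-j) ω)^2 := by
      intro ω
      have h3 : (X (t-1-j) ω / d * (if X (t-1-j) ω ≤ c then (1:ℝ) else 0))^2 =
          ((d⁻¹)^2 * (X (t-1-j) ω)^2) * (if X (t-1-j) ω ≤ c then (1:ℝ) else 0)^2 := by
        rw [div_eq_mul_inv]; ring
      rw [h3]
      have h4 : (if X (t-1-j) ω ≤ c then (1:ℝ) else 0)^2 ≤ 1 := by split_ifs <;> norm_num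
      have h5 : (0:ℝ) ≤ (d⁻¹)^2 * (X (t-1-j) ω)^2 := by positivity
      nlinarith
    have hint : ∫ ω, (X (t-1-j) ω / d * (if X (t-1-j) ω ≤ c then (1:ℝ) else 0))^2 ∂ℙ ≤
        ∫ ω, (d⁻¹)^2 * (X (t-1-j) ω)^2 ∂ℙ :=
      integral_mono (hbbsq_int (t-1-j)) ((hXsqint (t-1-j)).const_mul _) hpt
    refine hint.trans ?_
    rw [integral_const_mul]
    have h6 : ∫ ω, (X (t-1-j) ω)^2 ∂ℙ ≤ ((t:ℝ)-1) * K * σ^2 := by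
      refine (hXsq (t-1-j)).trans ?_
      exact mul_le_mul_of_nonneg_right (mul_le_mul_of_nonneg_right hmt hK.le) (sq_nonneg σ)
    have h7 : ((d:ℝ)⁻¹)^2 * (((t:ℝ)-1) * K * σ^2) = ((t:ℝ)-1) * K / n := by
      rw [inv_pow]
      have hd2 : d^2 = (n:ℝ) * σ^2 := by rw [hddef, mul_pow, hsq_n]
      rw [hd2]
      field_simp
    calc (d⁻¹)^2 * ∫ ω, (X (t-1-j) ω)^2 ∂ℙ ≤ (d⁻¹)^2 * (((t:ℝ)-1) * K * σ^2) := by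
          apply mul_le_mul_of_nonneg_left h6 (by positivity)
      _ = ((t:ℝ)-1) * K / n := h7
  -- Cauchy-Schwarz pointwise
  have hgsq_ptwise : ∀ t ω, g t ω ^ 2 ≤ (∑ j ∈ Stmt12.J k t, |θ|^j) *
      (∑ j ∈ Stmt12.J k t,
        |θ|^j * (X (t-1-j) ω / d * (if X (t-1-j) ω ≤ c then (1:ℝ) else 0))^2) := by
    intro t ω
    have habs : |g t ω| ≤ ∑ j ∈ Stmt12.J k t,
        |θ|^j * |X (t-1-j) ω / d * (if X (t-1-j) ω ≤ c then (1:ℝ) else 0)| := by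
      simp only [hgdef]
      refine (Finset.abs_sum_le_sum_abs _ _).trans ?_
      apply Finset.sum_le_sum
      intro j _
      rw [abs_mul, abs_pow]
    have h2 : g t ω ^2 ≤ (∑ j ∈ Stmt12.J k t,
        |θ|^j * |X (t-1-j) ω / d * (if X (t-1-j) ω ≤ c then (1:ℝ) else 0)|)^2 := by
      rw [← sq_abs (g t ω)]
      exact pow_le_pow_left₀ (abs_nonneg _) habs 2
    refine h2.trans ?_
    refine Finset.sum_sq_le_sum_mul_sum_of_sq_eq_mul _
      (fun j _ => by positivity) (fun j _ => by positivity) (fun j _ => ?_)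
    rw [mul_pow, sq_abs]
    ring
  -- integral bound for g²
  have hgsq_bound : ∀ t, 1 ≤ t → ∫ ω, g t ω ^2 ∂ℙ ≤
      (∑ j ∈ Stmt12.J k t, |θ|^j)^2 * (((t:ℝ)-1) * K / n) := by
    intro t ht
    have hS0 : (0:ℝ) ≤ ∑ j ∈ Stmt12.J k t, |θ|^j :=
      Finset.sum_nonneg fun j _ => by positivity
    have h1 : ∫ ω, g t ω ^2 ∂ℙ ≤ ∫ ω, (∑ j ∈ Stmt12.J k t, |θ|^j) *
        (∑ j ∈ Stmt12.J k t,
          |θ|^j * (X (t-1-j) ω / d * (if X (t-1-j) ω ≤ c then (1:ℝ) else 0))^2) ∂ℙ :=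
      integral_mono (hgsqint t)
        ((integrable_finset_sum _ fun j _ => (hbbsq_int (t-1-j)).const_mul _).const_mul _)
        (hgsq_ptwise t)
    refine h1.trans ?_
    rw [integral_const_mul, integral_finset_sum _ (fun j _ => (hbbsq_int (t-1-j)).const_mul _)]
    have h2 : ∑ j ∈ Stmt12.J k t,
        ∫ ω, |θ|^j * (X (t-1-j) ω / d * (if X (t-1-j) ω ≤ c then (1:ℝ) else 0))^2 ∂ℙ ≤
        (∑ j ∈ Stmt12.J k t, |θ|^j) * (((t:ℝ)-1) * K / n) := by
      rw [Finset.sum_mul]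
      apply Finset.sum_le_sum
      intro j hj
      rw [integral_const_mul]
      exact mul_le_mul_of_nonneg_left (hbbsq t ht j) (by positivity)
    calc (∑ j ∈ Stmt12.J k t, |θ|^j) * _ ≤ (∑ j ∈ Stmt12.J k t, |θ|^j) *
          ((∑ j ∈ Stmt12.J k t, |θ|^j) * (((t:ℝ)-1) * K / n)) :=
          mul_le_mul_of_nonneg_left h2 hS0
      _ = (∑ j ∈ Stmt12.J k t, |θ|^j)^2 * (((t:ℝ)-1) * K / n) := by ring
  -- Gauss-type sums
  have hGauss : ∀ m p : ℕ, m ≤ p → ∑ t ∈ Icc 1 m, ((t:ℝ)-1) ≤ (p:ℝ)*((p:ℝ)-1)/2 := by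
    intro m p hmp
    have e7 : ∑ t ∈ Icc 1 m, ((t:ℝ)-1) = ∑ i ∈ range m, (i:ℝ) := by
      rw [show Icc 1 m = Ico 1 (m + 1) from (Finset.Ico_add_one_right_eq_Icc 1 m).symm]
      rw [Finset.sum_Ico_eq_sum_range]
      simp only [Nat.add_sub_cancel]
      apply Finset.sum_congr rfl
      intro i _
      push_cast
      ring
    rw [e7]
    have h8 : (∑ i ∈ range m, i) * 2 ≤ p * (p-1) := by
      calc (∑ i ∈ range m, i) * 2 ≤ (∑ i ∈ range p, i) * 2 :=
            Nat.mul_le_mul_right _ (Finset.sum_le_sum_of_subset (Finset.range_subset_range.2 hmp))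
        _ = p * (p-1) := Finset.sum_range_id_mul_two p
    have hcast : ((p*(p-1):ℕ):ℝ) ≤ (p:ℝ)*((p:ℝ)-1) := by
      match p with
      | 0 => simp
      | (p'+1) =>
        apply le_of_eq
        push_cast [Nat.succ_sub_one]
        ring
    have h9 : (∑ i ∈ range m, (i:ℝ)) * 2 ≤ (p:ℝ)*((p:ℝ)-1) := by
      calc (∑ i ∈ range m, (i:ℝ)) * 2 = (((∑ i ∈ range m, i) * 2 : ℕ):ℝ) := by
            push_cast; ring
        _ ≤ ((p*(p-1):ℕ):ℝ) := Nat.cast_le.2 h8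
        _ ≤ (p:ℝ)*((p:ℝ)-1) := hcast
    linarith
  -- split the index set
  have hsplit : Icc 1 n = Icc 1 (min k n) ∪ Icc (k+1) n := by
    ext x; simp only [mem_Icc, mem_union, le_min_iff]; omega
  have hdisj2 : Disjoint (Icc 1 (min k n)) (Icc (k+1) n) := by
    rw [Finset.disjoint_left]
    intro a ha hb
    simp only [mem_Icc, le_min_iff] at ha hb
    omega
  have ht1cast : ∀ t:ℕ, 1 ≤ t → (0:ℝ) ≤ (t:ℝ)-1 := by
    intro t ht
    have : (1:ℝ) ≤ (t:ℝ) := by exact_mod_cast ht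
    linarith
  -- the per-term bound
  have hIB : ∀ t ∈ Icc 1 n, ∫ ω, M t ω ^2 ∂ℙ ≤
      (∑ j ∈ Stmt12.J k t, |θ|^j)^2 * (((t:ℝ)-1) * K / n) := by
    intro t htm
    have ht := (mem_Icc.1 htm).1
    rw [hMsq_eq t ht]
    exact hgsq_bound t ht
  -- part 1 : small t
  have hpart1 : ∑ t ∈ Icc 1 (min k n),
      (∑ j ∈ Stmt12.J k t, |θ|^j)^2 * (((t:ℝ)-1) * K / n) ≤
      (1-|θ|)⁻¹^2 * (K/n) * ((k:ℝ)*((k:ℝ)-1)/2) := by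
    have hstep : ∀ t ∈ Icc 1 (min k n),
        (∑ j ∈ Stmt12.J k t, |θ|^j)^2 * (((t:ℝ)-1) * K / n) ≤
        (1-|θ|)⁻¹^2 * (K/n) * ((t:ℝ)-1) := by
      intro t htm
      obtain ⟨ht1, htm2⟩ := mem_Icc.1 htm
      have htk : t ≤ k := le_trans htm2 (min_le_left _ _)
      have hSb : ∑ j ∈ Stmt12.J k t, |θ|^j ≤ (1-|θ|)⁻¹ := by
        rw [Stmt12.J, if_pos htk]
        exact Stmt12.geom_le hθ0 hθ t
      have hS0 : (0:ℝ) ≤ ∑ j ∈ Stmt12.J k t, |θ|^j :=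
        Finset.sum_nonneg fun j _ => by positivity
      have ht1' : (0:ℝ) ≤ (t:ℝ)-1 := ht1cast t ht1
      have hq : (0:ℝ) ≤ ((t:ℝ)-1) * K / n := by
        apply div_nonneg _ hnR.le
        exact mul_nonneg ht1' hK.le
      calc (∑ j ∈ Stmt12.J k t, |θ|^j)^2 * (((t:ℝ)-1) * K / n)
          ≤ ((1-|θ|)⁻¹)^2 * (((t:ℝ)-1) * K / n) :=
            mul_le_mul_of_nonneg_right (pow_le_pow_left₀ hS0 hSb 2) hq
        _ = (1-|θ|)⁻¹^2 * (K/n) * ((t:ℝ)-1) := by ring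
    refine (Finset.sum_le_sum hstep).trans ?_
    rw [← Finset.mul_sum]
    apply mul_le_mul_of_nonneg_left (hGauss (min k n) k (min_le_left _ _)) ?_
    have : (0:ℝ) ≤ K/n := div_nonneg hK.le hnR.le
    positivity
  -- part 2 : large t
  have hpart2 : ∑ t ∈ Icc (k+1) n,
      (∑ j ∈ Stmt12.J k t, |θ|^j)^2 * (((t:ℝ)-1) * K / n) ≤
      |θ|^(k+1) * (1-|θ|)⁻¹^2 * (K/n) * ((n:ℝ)*(n:ℝ)/2) := by
    have hstep : ∀ t ∈ Icc (k+1) n,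
        (∑ j ∈ Stmt12.J k t, |θ|^j)^2 * (((t:ℝ)-1) * K / n) ≤
        |θ|^(k+1) * (1-|θ|)⁻¹^2 * (K/n) * ((t:ℝ)-1) := by
      intro t htm
      obtain ⟨ht1, htn⟩ := mem_Icc.1 htm
      have hSb : ∑ j ∈ Stmt12.J k t, |θ|^j ≤ |θ|^(k+1) * (1-|θ|)⁻¹ := by
        rw [Stmt12.J, if_neg (by omega)]
        rw [Finset.sum_Ico_eq_sum_range]
        have hc : ∀ i ∈ range (t-(k+1)), |θ|^(k+1+i) = |θ|^(k+1) * |θ|^i :=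
          fun i _ => pow_add _ _ _
        rw [Finset.sum_congr rfl hc, ← Finset.mul_sum]
        exact mul_le_mul_of_nonneg_left (Stmt12.geom_le hθ0 hθ _) (by positivity)
      have hS0 : (0:ℝ) ≤ ∑ j ∈ Stmt12.J k t, |θ|^j :=
        Finset.sum_nonneg fun j _ => by positivity
      have h11 : (∑ j ∈ Stmt12.J k t, |θ|^j)^2 ≤ (|θ|^(k+1) * (1-|θ|)⁻¹)^2 :=
        pow_le_pow_left₀ hS0 hSb 2
      have h13 : (|θ|^(k+1))^2 ≤ |θ|^(k+1) := by
        have hle1 : |θ|^(k+1) ≤ 1 := pow_le_one₀ hθ0 hθ.le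
        nlinarith [pow_nonneg hθ0 (k+1)]
      have h12 : (|θ|^(k+1) * (1-|θ|)⁻¹)^2 ≤ |θ|^(k+1) * (1-|θ|)⁻¹^2 := by
        have : (|θ|^(k+1) * (1-|θ|)⁻¹)^2 = (|θ|^(k+1))^2 * ((1-|θ|)⁻¹)^2 := by ring
        rw [this]
        apply mul_le_mul_of_nonneg_right h13 (by positivity)
      have ht1' : (0:ℝ) ≤ (t:ℝ)-1 := ht1cast t (by omega)
      have hq : (0:ℝ) ≤ ((t:ℝ)-1) * K / n := by
        apply div_nonneg _ hnR.le
        exact mul_nonneg ht1' hK.le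
      calc (∑ j ∈ Stmt12.J k t, |θ|^j)^2 * (((t:ℝ)-1) * K / n)
          ≤ (|θ|^(k+1) * (1-|θ|)⁻¹^2) * (((t:ℝ)-1) * K / n) :=
            mul_le_mul_of_nonneg_right (h11.trans h12) hq
        _ = |θ|^(k+1) * (1-|θ|)⁻¹^2 * (K/n) * ((t:ℝ)-1) := by ring
    refine (Finset.sum_le_sum hstep).trans ?_
    rw [← Finset.mul_sum]
    have hsum2 : ∑ t ∈ Icc (k+1) n, ((t:ℝ)-1) ≤ (n:ℝ)*(n:ℝ)/2 := by
      have hsub : Icc (k+1) n ⊆ Icc 1 n := Icc_subset_Icc (by omega) le_rfl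
      have h14 : ∑ t ∈ Icc (k+1) n, ((t:ℝ)-1) ≤ ∑ t ∈ Icc 1 n, ((t:ℝ)-1) :=
        Finset.sum_le_sum_of_subset_of_nonneg hsub
          (fun t htm _ => ht1cast t (mem_Icc.1 htm).1)
      refine h14.trans ?_
      refine (hGauss n n le_rfl).trans ?_
      nlinarith [hnR]
    apply mul_le_mul_of_nonneg_left hsum2 ?_
    have hKn : (0:ℝ) ≤ K/n := div_nonneg hK.le hnR.le
    positivity
  -- put it together
  have h6 : ∫ ω, D ω ^2 ∂ℙ ≤ (n:ℝ)⁻¹ *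
      ((1-|θ|)⁻¹^2 * (K/n) * ((k:ℝ)*((k:ℝ)-1)/2) +
       |θ|^(k+1) * (1-|θ|)⁻¹^2 * (K/n) * ((n:ℝ)*(n:ℝ)/2)) := by
    rw [hDsq]
    apply mul_le_mul_of_nonneg_left ?_ (by positivity)
    calc ∑ t ∈ Icc 1 n, ∫ ω, M t ω ^ 2 ∂ℙ
        ≤ ∑ t ∈ Icc 1 n, (∑ j ∈ Stmt12.J k t, |θ|^j)^2 * (((t:ℝ)-1) * K / n) :=
          Finset.sum_le_sum hIB
      _ = (∑ t ∈ Icc 1 (min k n), (∑ j ∈ Stmt12.J k t, |θ|^j)^2 * (((t:ℝ)-1) * K / n)) +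
          ∑ t ∈ Icc (k+1) n, (∑ j ∈ Stmt12.J k t, |θ|^j)^2 * (((t:ℝ)-1) * K / n) := by
          rw [hsplit, Finset.sum_union hdisj2]
      _ ≤ _ := add_le_add hpart1 hpart2
  have hrhs : (n:ℝ)⁻¹ *
      ((1-|θ|)⁻¹^2 * (K/n) * ((k:ℝ)*((k:ℝ)-1)/2) +
       |θ|^(k+1) * (1-|θ|)⁻¹^2 * (K/n) * ((n:ℝ)*(n:ℝ)/2)) =
      (K / (1 - |θ|) ^ 2) * ((k:ℝ) * ((k:ℝ) - 1) / (2 * (n:ℝ) ^ 2) + |θ| ^ (k + 1) / 2) := by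
    have hne1 : (1-|θ|) ≠ 0 := ne_of_gt h1θ
    have hnne : (n:ℝ) ≠ 0 := ne_of_gt hnR
    field_simp
  rw [← hrhs]
  have h7 : (0:ℝ)^2 = 0 := by norm_num
  rw [h7, sub_zero]
  exact h6
end
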